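/- Let Γ = (V,E) be a finite graph with |V| = n and clique number c(Γ). Define a_r = z_{r+1}(Γ) for r ≥ 1, where z_r(Γ) is the maximum of ∑_{i=1}^r |C_i| over r cliques with empty total intersection. Then the formal power series F(x) = ∑_{r=1}^∞ a_r x^r satisfies (1−x)^2·F(x) = P(x) for an integer polynomial P with P(1) = c(Γ). -/

import Mathlib

/-- The clique number of a finite simple graph: the maximal cardinality of a clique. -/
noncomputable def cliqueNum {V : Type} [Fintype V] (G : SimpleGraph V) : ℕ :=
  sSup {n | ∃ C : Finset V, G.IsClique (C : Set V) ∧ C.card = n}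

/-- `zNum G r` : the maximum of `∑ |C i|` over sequences of `r` cliques with empty
total intersection. -/
noncomputable def zNum {V : Type} [Fintype V] [DecidableEq V] (G : SimpleGraph V) (r : ℕ) : ℕ :=
  sSup {m | ∃ C : Fin r → Finset V, (∀ i, G.IsClique ((C i : Set V))) ∧
    Finset.univ.inf C = ∅ ∧ m = ∑ i, (C i).card}

section Aux

variable {V : Type} [Fintype V] [DecidableEq V] (G : SimpleGraph V)

lemma mem_finset_inf {ι : Type*} (s : Finset ι) (f : ι → Finset V) (a : V) :
    a ∈ s.inf f ↔ ∀ i ∈ s, a ∈ f i := by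
  induction s using Finset.cons_induction with
  | empty => simp
  | cons i s hi ih => simp [ih]

lemma clique_set_nonempty :
    {n | ∃ C : Finset V, G.IsClique (C : Set V) ∧ C.card = n}.Nonempty :=
  ⟨0, ∅, by simp, rfl⟩

lemma clique_set_bdd :
    BddAbove {n | ∃ C : Finset V, G.IsClique (C : Set V) ∧ C.card = n} := by
  refine ⟨Fintype.card V, ?_⟩
  rintro m ⟨C, -, rfl⟩
  exact Finset.card_le_univ C

lemma zNum_bdd (r : ℕ) :
    BddAbove {m | ∃ C : Fin r → Finset V, (∀ i, G.IsClique ((C i : Set V))) ∧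
      Finset.univ.inf C = ∅ ∧ m = ∑ i, (C i).card} := by
  refine ⟨r * Fintype.card V, ?_⟩
  rintro m ⟨C, -, -, rfl⟩
  calc ∑ i, (C i).card ≤ ∑ _i : Fin r, Fintype.card V :=
        Finset.sum_le_sum fun i _ => Finset.card_le_univ _
    _ = r * Fintype.card V := by simp [Finset.sum_const, mul_comm]

lemma le_zNum (r : ℕ) (C : Fin r → Finset V) (h1 : ∀ i, G.IsClique ((C i : Set V)))
    (h2 : Finset.univ.inf C = ∅) : ∑ i, (C i).card ≤ zNum G r :=
  le_csSup (zNum_bdd G r) ⟨C, h1, h2, rfl⟩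

lemma card_le_cliqueNum (C : Finset V) (hC : G.IsClique (C : Set V)) :
    C.card ≤ cliqueNum G :=
  le_csSup (clique_set_bdd G) ⟨C, hC, rfl⟩

lemma zNum_succ (r : ℕ) (hn : Fintype.card V ≤ r) (hr : 1 ≤ r) :
    zNum G (r + 1) = zNum G r + cliqueNum G := by
  have : Nonempty (Fin r) := ⟨⟨0, hr⟩⟩
  apply le_antisymm
  · apply csSup_le
    · exact ⟨0, fun _ => ∅, fun i => by simp,
        by rw [Finset.inf_const Finset.univ_nonempty], by simp⟩
    rintro m ⟨C, hC, hinf, rfl⟩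
    have hv : ∀ v : V, ∃ i, v ∉ C i := by
      intro v
      by_contra h
      push_neg at h
      have : v ∈ Finset.univ.inf C := (mem_finset_inf _ _ _).2 fun i _ => h i
      simp [hinf] at this
    choose f hf using hv
    obtain ⟨j, hj⟩ : ∃ j : Fin (r + 1), ∀ v, f v ≠ j := by
      by_contra h
      push_neg at h
      have himg : (Finset.univ : Finset (Fin (r + 1))) ⊆ Finset.univ.image f := by
        intro j _
        obtain ⟨v, hv⟩ := h j
        exact Finset.mem_image.2 ⟨v, Finset.mem_univ v, hv⟩
      have h1 := Finset.card_le_card himg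
      have h2 := Finset.card_image_le (s := (Finset.univ : Finset V)) (f := f)
      simp [Finset.card_univ] at h1 h2
      omega
    have hinf' : Finset.univ.inf (fun k : Fin r => C (j.succAbove k)) = ∅ := by
      rw [Finset.eq_empty_iff_forall_notMem]
      intro v hvmem
      obtain ⟨k, hk⟩ := Fin.exists_succAbove_eq (hj v)
      have := (mem_finset_inf _ _ _).1 hvmem k (Finset.mem_univ k)
      rw [hk] at this
      exact hf v this
    calc ∑ i, (C i).card = (C j).card + ∑ k : Fin r, (C (j.succAbove k)).card :=
          Fin.sum_univ_succAbove _ j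
      _ ≤ cliqueNum G + zNum G r :=
          add_le_add (card_le_cliqueNum G _ (hC j))
            (le_zNum G r _ (fun k => hC _) hinf')
      _ = zNum G r + cliqueNum G := add_comm _ _
  · obtain ⟨D, hD, hDcard⟩ := Nat.sSup_mem (clique_set_nonempty G) (clique_set_bdd G)
    obtain ⟨C, hC, hinf, hsum⟩ := Nat.sSup_mem
      (s := {m | ∃ C : Fin r → Finset V, (∀ i, G.IsClique ((C i : Set V))) ∧
        Finset.univ.inf C = ∅ ∧ m = ∑ i, (C i).card})
      ⟨0, fun _ => ∅, fun i => by simp,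
        by rw [Finset.inf_const Finset.univ_nonempty], by simp⟩
      (zNum_bdd G r)
    set C' : Fin (r + 1) → Finset V := Fin.snoc C D with hC'
    have hsum' : zNum G r + cliqueNum G = ∑ i, (C' i).card := by
      rw [Fin.sum_univ_castSucc]
      simp only [hC', Fin.snoc_castSucc, Fin.snoc_last]
      rw [← hsum, hDcard]
      rfl
    rw [hsum']
    apply le_zNum
    · intro i
      refine Fin.lastCases ?_ ?_ i
      · simpa [hC', Fin.snoc_last] using hD
      · intro k
        simpa [hC', Fin.snoc_castSucc] using hC k
    · rw [Finset.eq_empty_iff_forall_notMem]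
      intro v hvmem
      have hvC : v ∈ Finset.univ.inf C := by
        refine (mem_finset_inf _ _ _).2 fun k _ => ?_
        have := (mem_finset_inf _ _ _).1 hvmem k.castSucc (Finset.mem_univ _)
        simpa [hC', Fin.snoc_castSucc] using this
      simp [hinf] at hvC

end Aux

theorem stmt18 {V : Type} [Fintype V] [DecidableEq V] (G : SimpleGraph V) :
    ∃ P : Polynomial ℤ,
      (1 - (PowerSeries.X : PowerSeries ℤ)) ^ 2 *
          PowerSeries.mk (fun r => if r = 0 then 0 else (zNum G (r + 1) : ℤ)) = ↑P ∧
      P.eval 1 = (cliqueNum G : ℤ) := by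
  classical
  set a : ℕ → ℤ := fun r => if r = 0 then 0 else (zNum G (r + 1) : ℤ) with ha
  set F : PowerSeries ℤ := PowerSeries.mk a with hF
  set F2 : PowerSeries ℤ := (1 - (PowerSeries.X : PowerSeries ℤ)) ^ 2 * F with hF2
  set nn : ℕ := Fintype.card V with hnn
  set N : ℕ := nn + 3 with hN
  -- expansion of F2
  have hexp : F2 = F + PowerSeries.X ^ 2 * F - (PowerSeries.X * F + PowerSeries.X * F) := by
    rw [hF2]; ring
  have hco : ∀ m : ℕ, (PowerSeries.coeff (R := ℤ) (m + 2)) F2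
      = (a (m + 2) + a m) - (a (m + 1) + a (m + 1)) := by
    intro m
    rw [hexp]
    rw [map_sub, map_add, map_add]
    rw [PowerSeries.coeff_X_pow_mul F 2 m]
    rw [show m + 2 = (m + 1) + 1 from rfl, PowerSeries.coeff_succ_X_mul]
    simp [hF, PowerSeries.coeff_mk]
  have hco1 : (PowerSeries.coeff (R := ℤ) 1) F2 = a 1 - (a 0 + a 0) := by
    rw [hexp, map_sub, map_add, map_add]
    rw [PowerSeries.coeff_X_pow_mul' F 2 1]
    rw [show (1 : ℕ) = 0 + 1 from rfl, PowerSeries.coeff_succ_X_mul]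
    simp [hF, PowerSeries.coeff_mk]
  have hco0 : (PowerSeries.coeff (R := ℤ) 0) F2 = 0 := by
    rw [hexp, map_sub, map_add, map_add]
    rw [PowerSeries.coeff_X_pow_mul' F 2 0]
    simp [hF, PowerSeries.coeff_mk, PowerSeries.coeff_zero_eq_constantCoeff, ha]
  -- key recursion in ℕ
  have hz : ∀ r : ℕ, nn ≤ r → 1 ≤ r → zNum G (r + 1) = zNum G r + cliqueNum G :=
    fun r h1 h2 => zNum_succ G r h1 h2
  -- a values for positive indices
  have haval : ∀ k : ℕ, 1 ≤ k → a k = (zNum G (k + 1) : ℤ) := by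
    intro k hk
    have hk0 : k ≠ 0 := by omega
    simp [ha, hk0]
  -- vanishing of coefficients
  have hvanish : ∀ m : ℕ, nn + 1 ≤ m → (PowerSeries.coeff (R := ℤ) (m + 2)) F2 = 0 := by
    intro m hm
    rw [hco m]
    rw [haval (m + 2) (by omega), haval (m + 1) (by omega), haval m (by omega)]
    have e1 : zNum G (m + 3) = zNum G (m + 2) + cliqueNum G := hz (m + 2) (by omega) (by omega)
    have e2 : zNum G (m + 2) = zNum G (m + 1) + cliqueNum G := hz (m + 1) (by omega) (by omega)
    have : zNum G (m + 2 + 1) = zNum G (m + 3) := rfl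
    push_cast [this, e1, e2]
    ring
  refine ⟨F2.trunc N, ?_, ?_⟩
  · -- F2 = ↑(trunc N F2)
    ext k
    rw [Polynomial.coeff_coe, PowerSeries.coeff_trunc]
    split_ifs with h
    · rfl
    · push_neg at h
      obtain ⟨m, rfl⟩ : ∃ m, k = m + 2 := ⟨k - 2, by omega⟩
      exact hvanish m (by omega)
  · -- evaluation at 1
    have hdeg : (F2.trunc N).natDegree < N := by
      by_cases hP : F2.trunc N = 0
      · rw [hP]; simp [hN]
      · exact (Polynomial.natDegree_lt_iff_degree_lt hP).2 (PowerSeries.degree_trunc_lt F2 N)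
    rw [Polynomial.eval_eq_sum_range' hdeg]
    have hcoeff : ∀ i ∈ Finset.range N, (F2.trunc N).coeff i * (1 : ℤ) ^ i
        = (PowerSeries.coeff (R := ℤ) i) F2 := by
      intro i hi
      rw [PowerSeries.coeff_trunc, if_pos (Finset.mem_range.mp hi), one_pow, mul_one]
    rw [Finset.sum_congr rfl hcoeff]
    -- telescoping
    set h : ℕ → ℤ := fun k => match k with
      | 0 => 0
      | Nat.succ k => a (k + 1) - a k with hh
    have hstep : ∀ k : ℕ, (PowerSeries.coeff (R := ℤ) (k + 1)) F2 = h (k + 1) - h k := by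
      intro k
      match k with
      | 0 =>
        rw [hco1]
        show a 1 - (a 0 + a 0) = (a 1 - a 0) - 0
        have : a 0 = 0 := by simp [ha]
        rw [this]; ring
      | Nat.succ m =>
        rw [hco m]
        show (a (m + 2) + a m) - (a (m + 1) + a (m + 1))
          = (a (m + 2) - a (m + 1)) - (a (m + 1) - a m)
        ring
    have hNsplit : N = (nn + 2) + 1 := by omega
    rw [hNsplit, Finset.sum_range_succ']
    rw [Finset.sum_congr rfl (fun k _ => hstep k)]
    rw [Finset.sum_range_sub h (nn + 2), hco0]
    show h (nn + 2) - h 0 + 0 = (cliqueNum G : ℤ)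
    have hval : h (nn + 2) = a (nn + 2) - a (nn + 1) := rfl
    rw [hval]
    rw [haval (nn + 2) (by omega), haval (nn + 1) (by omega)]
    have e1 : zNum G (nn + 3) = zNum G (nn + 2) + cliqueNum G := hz (nn + 2) (by omega) (by omega)
    have : zNum G (nn + 2 + 1) = zNum G (nn + 3) := rfl
    push_cast [this, e1]
    ring
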